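/- arXiv:2106.03028 — 7 statements merged into one kernel-verified Lean document; each statement's English description precedes it below -/
import Mathlib

section
/- Let V be a finite set with |V| = n ≥ 1, let N_1, …, N_M : V → A be labelings, and suppose there is a partition of {1,…,M} into clusters such that N_i = N_j whenever i and j lie in the same cluster, and |diff(N_i, N_j)| ≥ α·n whenever i and j lie in different clusters, where 0 < α ≤ 1. Let 0 < δ ≤ 1 and let u_1, …, u_s be sampled i.i.d. uniformly from V with s ≥ (2/α)·ln(M/δ). Then with probability at least 1 − δ the following holds simultaneously for all pairs i, j ∈ {1,…,M}: N_i(u_t) = N_j(u_t) for every t ∈ {1,…,s} if and only if i and j lie in the same cluster. -/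
/-- Under `α`-clustering (same cluster ⇒ identical labelings; different clusters ⇒
`|diff| ≥ α n`), with probability `≥ 1-δ` over `s ≥ (2/α)ln(M/δ)` uniform samples,
agreement on all samples holds iff the entities lie in the same cluster. -/
theorem stmt_3 {V A κ : Type*} [Fintype V] [DecidableEq A] [DecidableEq κ]
    (n : ℕ) (hn : 1 ≤ n) (hV : Fintype.card V = n)
    (M : ℕ) (N : Fin M → V → A) (cl : Fin M → κ)
    (α δ : ℝ) (hα0 : 0 < α) (hα1 : α ≤ 1) (hδ0 : 0 < δ) (hδ1 : δ ≤ 1)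
    (hsame : ∀ i j : Fin M, cl i = cl j → N i = N j)
    (hdiff : ∀ i j : Fin M, cl i ≠ cl j →
      α * n ≤ ((Finset.univ.filter (fun u : V => N i u ≠ N j u)).card : ℝ))
    (s : ℕ) (hs : (2 / α) * Real.log ((M : ℝ) / δ) ≤ (s : ℝ)) :
    1 - δ ≤ ((Finset.univ.filter
        (fun u : Fin s → V => ∀ i j : Fin M,
          ((∀ t : Fin s, N i (u t) = N j (u t)) ↔ cl i = cl j))).card : ℝ) /
      (n : ℝ) ^ s := by
  classical
  have hn0 : (0:ℝ) < (n:ℝ) := by exact_mod_cast hn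
  set P : (Fin s → V) → Prop := fun u => ∀ i j : Fin M,
      ((∀ t : Fin s, N i (u t) = N j (u t)) ↔ cl i = cl j) with hP
  have hcard_univ : (Finset.univ : Finset (Fin s → V)).card = n ^ s := by
    simp [Finset.card_univ, Fintype.card_fun, hV]
  set B := Finset.univ.filter (fun u : Fin s → V => ¬ P u) with hB
  have hsplit : (Finset.univ.filter P).card + B.card = n ^ s := by
    rw [← hcard_univ]
    exact Finset.card_filter_add_card_filter_not _
  -- bound on bad set
  set T : Fin M × Fin M → Finset (Fin s → V) := fun p =>
    if cl p.1 = cl p.2 then ∅ else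
      Fintype.piFinset (fun _ : Fin s =>
        Finset.univ.filter (fun v => N p.1 v = N p.2 v)) with hT
  have hsub : B ⊆ Finset.univ.biUnion T := by
    intro u hu
    simp only [hB, Finset.mem_filter, Finset.mem_univ, true_and, hP] at hu
    push_neg at hu
    obtain ⟨i, j, hij⟩ := hu
    rcases hij with ⟨hagree, hc⟩ | ⟨⟨t, hne⟩, hc⟩
    · refine Finset.mem_biUnion.2 ⟨(i, j), Finset.mem_univ _, ?_⟩
      simp only [hT, if_neg hc, Fintype.mem_piFinset, Finset.mem_filter, Finset.mem_univ,
        true_and]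
      exact hagree
    · exact absurd (congrFun (hsame i j hc) (u t)) hne
  have hTle : ∀ p : Fin M × Fin M, ((T p).card : ℝ) ≤ ((1 - α) * n) ^ s := by
    intro p
    have hbase : (0:ℝ) ≤ (1 - α) * n := by
      have : (0:ℝ) ≤ 1 - α := by linarith
      positivity
    by_cases hc : cl p.1 = cl p.2
    · simp only [hT, if_pos hc, Finset.card_empty, Nat.cast_zero]
      positivity
    · simp only [hT, if_neg hc]
      rw [Fintype.card_piFinset]
      have hSD : (Finset.univ.filter (fun v => N p.1 v = N p.2 v)).card
          + (Finset.univ.filter (fun v : V => ¬ N p.1 v = N p.2 v)).card = n := by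
        rw [← hV, ← Finset.card_univ]
        exact Finset.card_filter_add_card_filter_not _
      have hS : ((Finset.univ.filter (fun v => N p.1 v = N p.2 v)).card : ℝ)
          ≤ (1 - α) * n := by
        have hd := hdiff p.1 p.2 hc
        have : ((Finset.univ.filter (fun v => N p.1 v = N p.2 v)).card : ℝ)
            + ((Finset.univ.filter (fun v : V => ¬ N p.1 v = N p.2 v)).card : ℝ) = n := by
          exact_mod_cast hSD
        simp only [ne_eq] at hd
        linarith
      calc ((∏ _t : Fin s,
            (Finset.univ.filter (fun v => N p.1 v = N p.2 v)).card : ℕ) : ℝ)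
          = ((Finset.univ.filter (fun v => N p.1 v = N p.2 v)).card : ℝ) ^ s := by
            push_cast [Finset.prod_const, Finset.card_univ, Fintype.card_fin]; ring
        _ ≤ ((1 - α) * n) ^ s := by
            exact pow_le_pow_left₀ (by positivity) hS s
  have hkey : (M:ℝ)^2 * ((1 - α) * n) ^ s ≤ δ * (n:ℝ)^s := by
    rcases Nat.eq_zero_or_pos M with hM | hM
    · subst hM
      simp only [Nat.cast_zero]
      have : (0:ℝ) ≤ δ * (n:ℝ)^s := by positivity
      nlinarith
    · have hM1 : (1:ℝ) ≤ (M:ℝ) := by exact_mod_cast hM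
      have hMδ : (0:ℝ) < (M:ℝ) / δ := by positivity
      have hlog : 2 * Real.log ((M:ℝ)/δ) ≤ α * s := by
        have := mul_le_mul_of_nonneg_left hs (le_of_lt hα0)
        calc 2 * Real.log ((M:ℝ)/δ) = α * ((2/α) * Real.log ((M:ℝ)/δ)) := by
              field_simp
          _ ≤ α * s := this
      have h1 : ((1 - α)) ^ s ≤ Real.exp (-(α * s)) := by
        have hb : (0:ℝ) ≤ 1 - α := by linarith
        have hbe : 1 - α ≤ Real.exp (-α) := by
          have := Real.add_one_le_exp (-α)
          linarith
        calc (1 - α) ^ s ≤ (Real.exp (-α)) ^ s := pow_le_pow_left₀ hb hbe s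
          _ = Real.exp (-(α * s)) := by
            rw [← Real.exp_nat_mul]; ring_nf
      have h2 : Real.exp (-(α * s)) ≤ (δ / M) ^ 2 := by
        have : Real.exp (-(α * s)) ≤ Real.exp (-(2 * Real.log ((M:ℝ)/δ))) :=
          Real.exp_le_exp.2 (by linarith)
        have heq : Real.exp (-(2 * Real.log ((M:ℝ)/δ))) = (δ / M) ^ 2 := by
          rw [show -(2 * Real.log ((M:ℝ)/δ)) = (2:ℕ) * (-Real.log ((M:ℝ)/δ)) by push_cast; ring,
            Real.exp_nat_mul, ← Real.log_inv, Real.exp_log (by positivity)]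
          rw [inv_div]
        rw [heq] at this; exact this
      have hδM : (0:ℝ) < δ / M := by positivity
      have hM2 : (0:ℝ) < (M:ℝ)^2 := by positivity
      calc (M:ℝ)^2 * ((1 - α) * n) ^ s = (M:ℝ)^2 * ((1-α)^s * (n:ℝ)^s) := by
            rw [mul_pow]
        _ ≤ (M:ℝ)^2 * (Real.exp (-(α * s)) * (n:ℝ)^s) := by
            apply mul_le_mul_of_nonneg_left _ (le_of_lt hM2)
            apply mul_le_mul_of_nonneg_right h1 (by positivity)
        _ ≤ (M:ℝ)^2 * ((δ/M)^2 * (n:ℝ)^s) := by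
            apply mul_le_mul_of_nonneg_left _ (le_of_lt hM2)
            apply mul_le_mul_of_nonneg_right h2 (by positivity)
        _ = δ^2 * (n:ℝ)^s := by
            rw [div_pow]
            field_simp
        _ ≤ δ * (n:ℝ)^s := by
            have hδ2 : δ^2 ≤ δ := by nlinarith
            exact mul_le_mul_of_nonneg_right hδ2 (le_of_lt (pow_pos hn0 s))
  have hBle : (B.card : ℝ) ≤ δ * (n:ℝ)^s := by
    calc (B.card : ℝ) ≤ ((Finset.univ.biUnion T).card : ℝ) := by
          exact_mod_cast Finset.card_le_card hsub
      _ ≤ ∑ p : Fin M × Fin M, ((T p).card : ℝ) := by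
          exact_mod_cast Finset.card_biUnion_le
      _ ≤ ∑ _p : Fin M × Fin M, ((1 - α) * n) ^ s := Finset.sum_le_sum (fun p _ => hTle p)
      _ = ((M * M : ℕ) : ℝ) * ((1 - α) * n) ^ s := by
          rw [Finset.sum_const, Finset.card_univ, Fintype.card_prod, Fintype.card_fin,
            nsmul_eq_mul]
      _ = (M:ℝ)^2 * ((1 - α) * n) ^ s := by push_cast; ring
      _ ≤ δ * (n:ℝ)^s := hkey
  have hns : (0:ℝ) < (n:ℝ)^s := by positivity
  rw [le_div_iff₀ hns]
  have hGc : ((Finset.univ.filter P).card : ℝ) = (n:ℝ)^s - (B.card : ℝ) := by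
    have : ((Finset.univ.filter P).card : ℝ) + (B.card : ℝ) = (n:ℝ)^s := by
      exact_mod_cast hsplit
    linarith
  rw [hGc]
  nlinarith
end

section
/- Let V be a finite set with |V| = n ≥ 1, let N_1, …, N_M : V → A be labelings, and suppose there is a partition of {1,…,M} into clusters such that |diff(N_i, N_j)| ≤ β·n whenever i and j lie in the same cluster, and |diff(N_i, N_j)| ≥ α·n whenever i and j lie in different clusters, where 0 ≤ β < α ≤ 1 are reals. Let 0 < δ ≤ 1 and let u_1, …, u_s be sampled i.i.d. uniformly from V with s ≥ 4·ln(M/δ)/(α−β)². For each pair i, j define Count(i,j) = |{t ∈ {1,…,s} : N_i(u_t) = N_j(u_t)}|. Then with probability at least 1 − δ the following holds simultaneously for all pairs i ≠ j: Count(i,j) ≥ (1 − (α+β)/2)·s if and only if i and j lie in the same cluster. -/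
set_option maxHeartbeats 1000000

open Real

section
open Set

lemma hoeff_bern (p : ℝ) (hp0 : 0 ≤ p) (hp1 : p ≤ 1) (x : ℝ) (hx : 0 ≤ x) :
    1 - p + p * exp x ≤ exp (x * p + x ^ 2 / 8) := by
  set D : ℝ → ℝ := fun y => 1 - p + p * exp y with hD
  have hDpos : ∀ y : ℝ, 0 ≤ y → 1 ≤ D y := by
    intro y hy
    have h1 : 1 ≤ exp y := one_le_exp hy
    have : p * 1 ≤ p * exp y := by nlinarith
    simp only [hD]; nlinarith
  have hDD : ∀ y : ℝ, HasDerivAt D (p * exp y) y := by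
    intro y
    exact ((Real.hasDerivAt_exp y).const_mul p).const_add (1 - p)
  set G : ℝ → ℝ := fun y => p + y / 4 - p * exp y / D y with hG
  have hGD : ∀ y : ℝ, 0 ≤ y →
      HasDerivAt G (1 / 4 - p * exp y * (1 - p) / (D y) ^ 2) y := by
    intro y hy
    have hne : D y ≠ 0 := by have := hDpos y hy; linarith
    have h1 : HasDerivAt (fun z => p * exp z / D z)
        ((p * exp y * D y - p * exp y * (p * exp y)) / (D y) ^ 2) y :=
      ((Real.hasDerivAt_exp y).const_mul p).div (hDD y) hne
    have h2 : HasDerivAt (fun z : ℝ => p + z / 4) (1 / 4) y := by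
      simpa using ((hasDerivAt_id y).div_const 4).const_add p
    have h3 : HasDerivAt G (1 / 4 - (p * exp y * D y - p * exp y * (p * exp y)) / (D y) ^ 2) y := h2.sub h1
    convert h3 using 1
    have hnum : p * exp y * D y - p * exp y * (p * exp y) = p * exp y * (1 - p) := by
      simp only [hD]; ring
    rw [hnum]
  have hGderiv_nonneg : ∀ y : ℝ, 0 ≤ y → 0 ≤ 1 / 4 - p * exp y * (1 - p) / (D y) ^ 2 := by
    intro y hy
    have h1 : 1 ≤ D y := hDpos y hy
    have h2 : 0 < (D y) ^ 2 := by positivity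
    rw [sub_nonneg, div_le_iff₀ h2]
    have hDy : D y = 1 - p + p * exp y := rfl
    nlinarith [sq_nonneg (p * exp y - (1 - p))]
  have hGmono : MonotoneOn G (Ici 0) := by
    apply monotoneOn_of_deriv_nonneg (convex_Ici 0)
    · exact fun y hy => ((hGD y hy).continuousAt.continuousWithinAt)
    · intro y hy
      rw [interior_Ici] at hy
      exact ((hGD y (le_of_lt hy)).differentiableAt.differentiableWithinAt)
    · intro y hy
      rw [interior_Ici] at hy
      rw [(hGD y (le_of_lt hy)).deriv]
      exact hGderiv_nonneg y (le_of_lt hy)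
  have hG0 : G 0 = 0 := by simp [hG, hD]
  have hGnonneg : ∀ y : ℝ, 0 ≤ y → 0 ≤ G y := by
    intro y hy
    have := hGmono (self_mem_Ici) (mem_Ici.2 hy) hy
    rwa [hG0] at this
  set F : ℝ → ℝ := fun y => y * p + y ^ 2 / 8 - log (D y) with hF
  have hFD : ∀ y : ℝ, 0 ≤ y → HasDerivAt F (G y) y := by
    intro y hy
    have hne : D y ≠ 0 := by have := hDpos y hy; linarith
    have h1 : HasDerivAt (fun z => log (D z)) (p * exp y / D y) y := (hDD y).log hne
    have h2 : HasDerivAt (fun z : ℝ => z * p + z ^ 2 / 8) (p + y / 4) y := by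
      have ha : HasDerivAt (fun z : ℝ => z * p) p y := by
        simpa using (hasDerivAt_id y).mul_const p
      have hb : HasDerivAt (fun z : ℝ => z ^ 2 / 8) (2 * y / 8) y := by
        simpa using (hasDerivAt_pow 2 y).div_const 8
      have h4 : HasDerivAt (fun z : ℝ => z * p + z ^ 2 / 8) (p + 2 * y / 8) y := ha.add hb
      convert h4 using 1; ring
    have h3 : HasDerivAt F (p + y / 4 - p * exp y / D y) y := h2.sub h1
    simpa [hG] using h3
  have hFmono : MonotoneOn F (Ici 0) := by
    apply monotoneOn_of_deriv_nonneg (convex_Ici 0)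
    · exact fun y hy => ((hFD y hy).continuousAt.continuousWithinAt)
    · intro y hy
      rw [interior_Ici] at hy
      exact ((hFD y (le_of_lt hy)).differentiableAt.differentiableWithinAt)
    · intro y hy
      rw [interior_Ici] at hy
      rw [(hFD y (le_of_lt hy)).deriv]
      exact hGnonneg y (le_of_lt hy)
  have hF0 : F 0 = 0 := by simp [hF, hD]
  have hFx : 0 ≤ F x := by
    have := hFmono (self_mem_Ici) (mem_Ici.2 hx) hx
    rwa [hF0] at this
  have hDx : (0:ℝ) < D x := lt_of_lt_of_le one_pos (hDpos x hx)
  have : log (D x) ≤ x * p + x ^ 2 / 8 := by simp only [hF] at hFx; linarith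
  calc 1 - p + p * exp x = D x := by simp [hD]
    _ = exp (log (D x)) := (exp_log hDx).symm
    _ ≤ exp (x * p + x ^ 2 / 8) := exp_le_exp.2 this

end

section
open Finset

lemma sum_exp_count {V : Type*} [Fintype V] (P : V → Prop) [DecidablePred P] (s : ℕ) (l : ℝ) :
    ∑ u : Fin s → V, exp (l * ((univ.filter (fun t : Fin s => P (u t))).card : ℝ))
      = (∑ v : V, exp (l * (if P v then 1 else 0)))^s := by
  have h1 : ∀ u : Fin s → V,
      exp (l * ((univ.filter (fun t : Fin s => P (u t))).card : ℝ))
        = ∏ t : Fin s, exp (l * (if P (u t) then 1 else 0)) := by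
    intro u
    rw [← Real.exp_sum]
    congr 1
    rw [Finset.card_filter]
    push_cast
    rw [Finset.mul_sum]
  simp_rw [h1]
  rw [← Fin.prod_const s (∑ v : V, exp (l * (if P v then 1 else 0)))]
  rw [Finset.prod_univ_sum]
  rw [← Fintype.piFinset_univ]

lemma tail_bound {V : Type*} [Fintype V] (P : V → Prop) [DecidablePred P]
    (s : ℕ) (p ε : ℝ) (hp0 : 0 ≤ p) (hp1 : p ≤ 1) (hε : 0 ≤ ε)
    (hd : ((univ.filter P).card : ℝ) ≤ p * (Fintype.card V)) :
    ((univ.filter (fun u : Fin s → V =>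
        (p + ε) * s ≤ ((univ.filter (fun t : Fin s => P (u t))).card : ℝ))).card : ℝ)
      ≤ (Fintype.card V : ℝ)^s * exp (-(2 * ε^2 * s)) := by
  set n : ℝ := (Fintype.card V : ℝ) with hn
  set d : ℝ := ((univ.filter P).card : ℝ) with hdd
  set l : ℝ := 4 * ε with hl
  have hl0 : 0 ≤ l := by positivity
  -- inner sum
  have hinner : ∑ v : V, exp (l * (if P v then 1 else 0)) ≤ n * exp (l * p + l ^ 2 / 8) := by
    have h1 : ∑ v : V, exp (l * (if P v then 1 else 0))
        = d * exp l + (n - d) := by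
      have h2 : ∀ v : V, exp (l * (if P v then 1 else 0))
          = (if P v then exp l else 1) := by
        intro v; split <;> simp
      simp_rw [h2]
      rw [Finset.sum_ite, Finset.sum_const, Finset.sum_const]
      have h3 : (univ.filter (fun v : V => ¬ P v)).card
          = Fintype.card V - (univ.filter P).card := by
        have := Finset.card_filter_add_card_filter_not (s := (univ : Finset V)) (p := P)
        simp only [Finset.card_univ] at this
        omega
      rw [h3, hdd, hn]
      simp only [nsmul_eq_mul, mul_one]
      have hle : (univ.filter P).card ≤ Fintype.card V := by
        have := Finset.card_filter_le (univ : Finset V) P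
        simpa [Finset.card_univ] using this
      rw [Nat.cast_sub hle]
      try push_cast
      try ring
    rw [h1]
    have hexp1 : 1 ≤ exp l := Real.one_le_exp hl0
    have h5 : d * exp l + (n - d) ≤ n * (1 - p + p * exp l) := by nlinarith
    have h6 : n * (1 - p + p * exp l) ≤ n * exp (l * p + l ^ 2 / 8) := by
      have hn0 : 0 ≤ n := by positivity
      exact mul_le_mul_of_nonneg_left (hoeff_bern p hp0 hp1 l hl0) hn0
    linarith
  -- main chain
  set B := univ.filter (fun u : Fin s → V =>
      (p + ε) * s ≤ ((univ.filter (fun t : Fin s => P (u t))).card : ℝ)) with hB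
  have hchain : (B.card : ℝ) * exp (l * ((p + ε) * s))
      ≤ (n * exp (l * p + l ^ 2 / 8)) ^ s := by
    have hstep1 : (B.card : ℝ) * exp (l * ((p + ε) * s))
        ≤ ∑ u ∈ B, exp (l * ((univ.filter (fun t : Fin s => P (u t))).card : ℝ)) := by
      have := Finset.card_nsmul_le_sum B
        (fun u => exp (l * ((univ.filter (fun t : Fin s => P (u t))).card : ℝ)))
        (exp (l * ((p + ε) * s)))
        (fun u hu => Real.exp_le_exp.2
          (mul_le_mul_of_nonneg_left (Finset.mem_filter.1 hu).2 hl0))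
      simpa [nsmul_eq_mul] using this
    have hstep2 : ∑ u ∈ B, exp (l * ((univ.filter (fun t : Fin s => P (u t))).card : ℝ))
        ≤ ∑ u : Fin s → V, exp (l * ((univ.filter (fun t : Fin s => P (u t))).card : ℝ)) := by
      apply Finset.sum_le_sum_of_subset_of_nonneg (Finset.filter_subset _ _)
      intro u _ _; positivity
    have hstep3 := (sum_exp_count P s l)
    have hstep4 : (∑ v : V, exp (l * (if P v then 1 else 0)))^s
        ≤ (n * exp (l * p + l ^ 2 / 8)) ^ s := by
      apply pow_le_pow_left₀ _ hinner
      positivity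
    calc (B.card : ℝ) * exp (l * ((p + ε) * s))
        ≤ ∑ u ∈ B, exp (l * ((univ.filter (fun t : Fin s => P (u t))).card : ℝ)) := hstep1
      _ ≤ ∑ u : Fin s → V, exp (l * ((univ.filter (fun t : Fin s => P (u t))).card : ℝ)) := hstep2
      _ = (∑ v : V, exp (l * (if P v then 1 else 0)))^s := hstep3
      _ ≤ _ := hstep4
  have hE : (0:ℝ) < exp (l * ((p + ε) * s)) := Real.exp_pos _
  rw [mul_pow, ← Real.exp_nat_mul] at hchain
  have : (B.card : ℝ) ≤ n ^ s * exp (s * (l * p + l ^ 2 / 8)) / exp (l * ((p + ε) * s)) :=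
    (le_div_iff₀ hE).2 hchain
  calc (B.card : ℝ) ≤ n ^ s * exp (s * (l * p + l ^ 2 / 8)) / exp (l * ((p + ε) * s)) := this
    _ = n ^ s * exp (-(2 * ε^2 * s)) := by
        rw [mul_div_assoc, ← Real.exp_sub]
        congr 1
        rw [hl]; ring

/-- Under `(α,β)`-clustering, with probability `≥ 1-δ` over
`s ≥ 4 ln(M/δ)/(α-β)²` uniform samples, the count of agreeing samples exceeds the
threshold `(1-(α+β)/2)·s` iff the entities lie in the same cluster. -/
theorem stmt_4 {V A κ : Type*} [Fintype V] [DecidableEq A] [DecidableEq κ]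
    (n : ℕ) (hn : 1 ≤ n) (hV : Fintype.card V = n)
    (M : ℕ) (N : Fin M → V → A) (cl : Fin M → κ)
    (α β δ : ℝ) (hβ0 : 0 ≤ β) (hβα : β < α) (hα1 : α ≤ 1) (hδ0 : 0 < δ) (hδ1 : δ ≤ 1)
    (hsame : ∀ i j : Fin M, cl i = cl j →
      ((Finset.univ.filter (fun u : V => N i u ≠ N j u)).card : ℝ) ≤ β * n)
    (hdiff : ∀ i j : Fin M, cl i ≠ cl j →
      α * n ≤ ((Finset.univ.filter (fun u : V => N i u ≠ N j u)).card : ℝ))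
    (s : ℕ) (hs : 4 * Real.log ((M : ℝ) / δ) / (α - β) ^ 2 ≤ (s : ℝ)) :
    1 - δ ≤ ((Finset.univ.filter
        (fun u : Fin s → V => ∀ i j : Fin M, i ≠ j →
          (((1 - (α + β) / 2) * s ≤
              ((Finset.univ.filter (fun t : Fin s => N i (u t) = N j (u t))).card : ℝ)) ↔
            cl i = cl j))).card : ℝ) /
      (n : ℝ) ^ s := by
  classical
  set ε : ℝ := (α - β) / 2 with hε
  have hε0 : 0 < ε := by rw [hε]; linarith
  have hα0 : 0 < α := lt_of_le_of_lt hβ0 hβα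
  have hcV : (Fintype.card V : ℝ) = (n : ℝ) := by exact_mod_cast congrArg Nat.cast hV
  have hnpos : (0:ℝ) < (n:ℝ)^s := by
    have : (0:ℝ) < (n:ℝ) := by exact_mod_cast hn
    positivity
  set E : ℝ := Real.exp (-(2 * ε^2 * s)) with hE
  have hEpos : 0 < E := Real.exp_pos _
  -- per-pair bound
  have pair_bound : ∀ i j : Fin M, i ≠ j →
      ((univ.filter (fun u : Fin s → V =>
        ¬(((1 - (α + β) / 2) * s ≤
            ((univ.filter (fun t : Fin s => N i (u t) = N j (u t))).card : ℝ)) ↔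
          cl i = cl j))).card : ℝ) ≤ (n:ℝ)^s * E := by
    intro i j hij
    by_cases hc : cl i = cl j
    · -- same cluster : bad event means agreement count below threshold
      have hsub : (univ.filter (fun u : Fin s → V =>
            ¬(((1 - (α + β) / 2) * s ≤
                ((univ.filter (fun t : Fin s => N i (u t) = N j (u t))).card : ℝ)) ↔
              cl i = cl j)))
          ⊆ (univ.filter (fun u : Fin s → V =>
            (β + ε) * s ≤ ((univ.filter (fun t : Fin s => ¬ (N i (u t) = N j (u t)))).card : ℝ))) := by
        intro u hu
        simp only [Finset.mem_filter, Finset.mem_univ, true_and] at hu ⊢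
        have hlt : ((univ.filter (fun t : Fin s => N i (u t) = N j (u t))).card : ℝ)
            < (1 - (α + β) / 2) * s := by
          by_contra h
          push_neg at h
          exact hu (iff_of_true h hc)
        have hsum : ((univ.filter (fun t : Fin s => N i (u t) = N j (u t))).card : ℝ)
            + ((univ.filter (fun t : Fin s => ¬ (N i (u t) = N j (u t)))).card : ℝ) = s := by
          have h := Finset.card_filter_add_card_filter_not
            (s := (univ : Finset (Fin s))) (p := fun t => N i (u t) = N j (u t))
          simp only [Finset.card_univ, Fintype.card_fin] at h
          exact_mod_cast h
        rw [hε]; linarith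
      have htb := tail_bound (fun v : V => ¬ (N i v = N j v)) s β ε hβ0
        (le_trans (le_of_lt hβα) hα1) (le_of_lt hε0)
        (by rw [hcV]; simpa [ne_eq] using hsame i j hc)
      rw [hcV] at htb
      calc ((univ.filter _).card : ℝ) ≤ _ := Nat.cast_le.2 (Finset.card_le_card hsub)
        _ ≤ (n:ℝ)^s * E := htb
    · -- different clusters : bad event means agreement count above threshold
      have hsub : (univ.filter (fun u : Fin s → V =>
            ¬(((1 - (α + β) / 2) * s ≤
                ((univ.filter (fun t : Fin s => N i (u t) = N j (u t))).card : ℝ)) ↔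
              cl i = cl j)))
          ⊆ (univ.filter (fun u : Fin s → V =>
            ((1 - α) + ε) * s ≤ ((univ.filter (fun t : Fin s => N i (u t) = N j (u t))).card : ℝ))) := by
        intro u hu
        simp only [Finset.mem_filter, Finset.mem_univ, true_and] at hu ⊢
        have hle : (1 - (α + β) / 2) * s ≤
            ((univ.filter (fun t : Fin s => N i (u t) = N j (u t))).card : ℝ) := by
          by_contra h
          exact hu (iff_of_false h hc)
        have : ((1 - α) + ε) = 1 - (α + β) / 2 := by rw [hε]; ring
        linarith [this ▸ hle]
      have hdcard : ((univ.filter (fun v : V => N i v = N j v)).card : ℝ)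
          ≤ (1 - α) * (Fintype.card V) := by
        have hsum : ((univ.filter (fun v : V => N i v = N j v)).card : ℝ)
            + ((univ.filter (fun v : V => ¬ (N i v = N j v))).card : ℝ)
            = (Fintype.card V : ℝ) := by
          have := Finset.card_filter_add_card_filter_not
            (s := (univ : Finset V)) (p := fun v => N i v = N j v)
          simp only [Finset.card_univ] at this
          exact_mod_cast congrArg Nat.cast this
        have hd2 : α * n ≤ ((univ.filter (fun v : V => ¬ (N i v = N j v))).card : ℝ) := by
          simpa [ne_eq] using hdiff i j hc
        rw [hcV]
        linarith
      have htb := tail_bound (fun v : V => N i v = N j v) s (1 - α) ε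
        (by linarith) (by linarith) (le_of_lt hε0) hdcard
      rw [hcV] at htb
      calc ((univ.filter _).card : ℝ) ≤ _ := Nat.cast_le.2 (Finset.card_le_card hsub)
        _ ≤ (n:ℝ)^s * E := htb
  -- union bound
  set Bad := univ.filter (fun u : Fin s → V =>
      ¬ ∀ i j : Fin M, i ≠ j →
        (((1 - (α + β) / 2) * s ≤
            ((univ.filter (fun t : Fin s => N i (u t) = N j (u t))).card : ℝ)) ↔
          cl i = cl j)) with hBad
  have hBadsub : Bad ⊆ (univ : Finset (Fin M × Fin M)).biUnion (fun ij =>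
      univ.filter (fun u : Fin s → V => ij.1 ≠ ij.2 ∧
        ¬(((1 - (α + β) / 2) * s ≤
            ((univ.filter (fun t : Fin s => N ij.1 (u t) = N ij.2 (u t))).card : ℝ)) ↔
          cl ij.1 = cl ij.2))) := by
    intro u hu
    rw [hBad, Finset.mem_filter] at hu
    obtain ⟨-, hu⟩ := hu
    push_neg at hu
    obtain ⟨i, j, hij, hiff⟩ := hu
    refine Finset.mem_biUnion.2 ⟨(i, j), Finset.mem_univ _, ?_⟩
    simp only [Finset.mem_filter, Finset.mem_univ, true_and]
    refine ⟨hij, fun h => ?_⟩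
    rcases hiff with ⟨h1, h2⟩ | ⟨h1, h2⟩
    · exact h2 (h.1 h1)
    · exact absurd (h.2 h2) (not_le.2 h1)
  have hBadcard : (Bad.card : ℝ) ≤ (M:ℝ)^2 * ((n:ℝ)^s * E) := by
    have h1 : Bad.card ≤ ∑ ij : Fin M × Fin M,
        (univ.filter (fun u : Fin s → V => ij.1 ≠ ij.2 ∧
          ¬(((1 - (α + β) / 2) * s ≤
              ((univ.filter (fun t : Fin s => N ij.1 (u t) = N ij.2 (u t))).card : ℝ)) ↔
            cl ij.1 = cl ij.2))).card :=
      le_trans (Finset.card_le_card hBadsub) (Finset.card_biUnion_le)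
    have h2 : ∀ ij : Fin M × Fin M,
        ((univ.filter (fun u : Fin s → V => ij.1 ≠ ij.2 ∧
          ¬(((1 - (α + β) / 2) * s ≤
              ((univ.filter (fun t : Fin s => N ij.1 (u t) = N ij.2 (u t))).card : ℝ)) ↔
            cl ij.1 = cl ij.2))).card : ℝ) ≤ (n:ℝ)^s * E := by
      intro ij
      by_cases hij : ij.1 = ij.2
      · have : (univ.filter (fun u : Fin s → V => ij.1 ≠ ij.2 ∧
          ¬(((1 - (α + β) / 2) * s ≤
              ((univ.filter (fun t : Fin s => N ij.1 (u t) = N ij.2 (u t))).card : ℝ)) ↔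
            cl ij.1 = cl ij.2))) = ∅ := by
          apply Finset.filter_false_of_mem
          intro u _
          simp [hij]
        rw [this]
        simp only [Finset.card_empty, Nat.cast_zero]
        positivity
      · have hsub2 : (univ.filter (fun u : Fin s → V => ij.1 ≠ ij.2 ∧
          ¬(((1 - (α + β) / 2) * s ≤
              ((univ.filter (fun t : Fin s => N ij.1 (u t) = N ij.2 (u t))).card : ℝ)) ↔
            cl ij.1 = cl ij.2)))
            ⊆ (univ.filter (fun u : Fin s → V =>
          ¬(((1 - (α + β) / 2) * s ≤
              ((univ.filter (fun t : Fin s => N ij.1 (u t) = N ij.2 (u t))).card : ℝ)) ↔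
            cl ij.1 = cl ij.2))) :=
          Finset.monotone_filter_right _ (fun u _ h => h.2)
        calc ((univ.filter _).card : ℝ)
            ≤ _ := Nat.cast_le.2 (Finset.card_le_card hsub2)
          _ ≤ (n:ℝ)^s * E := pair_bound ij.1 ij.2 hij
    calc (Bad.card : ℝ) ≤ ∑ ij : Fin M × Fin M, ((univ.filter (fun u : Fin s → V => ij.1 ≠ ij.2 ∧
          ¬(((1 - (α + β) / 2) * s ≤
              ((univ.filter (fun t : Fin s => N ij.1 (u t) = N ij.2 (u t))).card : ℝ)) ↔
            cl ij.1 = cl ij.2))).card : ℝ) := by exact_mod_cast h1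
      _ ≤ ∑ _ij : Fin M × Fin M, (n:ℝ)^s * E := Finset.sum_le_sum (fun ij _ => h2 ij)
      _ = (M:ℝ)^2 * ((n:ℝ)^s * E) := by
          rw [Finset.sum_const, Finset.card_univ, Fintype.card_prod, Fintype.card_fin,
            nsmul_eq_mul]
          push_cast
          ring
  -- M^2 * E ≤ δ
  have hME : (M:ℝ)^2 * E ≤ δ := by
    rcases Nat.eq_zero_or_pos M with hM | hM
    · subst hM
      simp only [Nat.cast_zero]
      nlinarith [hEpos]
    · have hM1 : (1:ℝ) ≤ (M:ℝ) := by exact_mod_cast hM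
      have hMδ : (0:ℝ) < (M:ℝ) / δ := by positivity
      have hlog : 2 * Real.log ((M:ℝ)/δ) ≤ 2 * ε^2 * s := by
        have hab : (0:ℝ) < (α - β)^2 := by nlinarith
        have := (div_le_iff₀ hab).1 hs
        rw [hε]
        nlinarith
      have hEle : E ≤ (δ/(M:ℝ))^2 := by
        rw [hE]
        have : Real.exp (-(2 * Real.log ((M:ℝ)/δ))) = (δ/(M:ℝ))^2 := by
          rw [Real.exp_neg, show (2:ℝ) * Real.log ((M:ℝ)/δ) = Real.log ((M:ℝ)/δ) + Real.log ((M:ℝ)/δ) by ring,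
            Real.exp_add, Real.exp_log hMδ]
          rw [div_pow]
          field_simp
        rw [← this]
        exact Real.exp_le_exp.2 (by linarith)
      have hM0 : (0:ℝ) < (M:ℝ) := by linarith
      calc (M:ℝ)^2 * E ≤ (M:ℝ)^2 * (δ/(M:ℝ))^2 := by
            apply mul_le_mul_of_nonneg_left hEle (by positivity)
        _ = ((M:ℝ) * (δ/(M:ℝ)))^2 := by rw [mul_pow]
        _ = δ^2 := by rw [mul_div_cancel₀ _ (ne_of_gt hM0)]
        _ ≤ δ := by nlinarith
  -- conclude
  have hcards : ((univ.filter
        (fun u : Fin s → V => ∀ i j : Fin M, i ≠ j →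
          (((1 - (α + β) / 2) * s ≤
              ((univ.filter (fun t : Fin s => N i (u t) = N j (u t))).card : ℝ)) ↔
            cl i = cl j))).card : ℝ) + (Bad.card : ℝ) = (n:ℝ)^s := by
    have := Finset.card_filter_add_card_filter_not
      (s := (univ : Finset (Fin s → V)))
      (p := fun u : Fin s → V => ∀ i j : Fin M, i ≠ j →
          (((1 - (α + β) / 2) * s ≤
              ((univ.filter (fun t : Fin s => N i (u t) = N j (u t))).card : ℝ)) ↔
            cl i = cl j))
    have hcu : (univ : Finset (Fin s → V)).card = n ^ s := by
      rw [Finset.card_univ, Fintype.card_fun]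
      simp [hV]
    rw [hcu] at this
    rw [hBad]
    exact_mod_cast this
  have hBδ : (Bad.card : ℝ) ≤ δ * (n:ℝ)^s := by
    calc (Bad.card : ℝ) ≤ (M:ℝ)^2 * ((n:ℝ)^s * E) := hBadcard
      _ = ((M:ℝ)^2 * E) * (n:ℝ)^s := by ring
      _ ≤ δ * (n:ℝ)^s := mul_le_mul_of_nonneg_right hME (le_of_lt hnpos)
  rw [le_div_iff₀ hnpos]
  have hexp : (1 - δ) * (n:ℝ)^s = (n:ℝ)^s - δ * (n:ℝ)^s := by ring
  linarith

end
end

section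
/- Let n ≥ 1 bins be given, let 0 < δ ≤ 1 be real, and let m balls be placed independently, each into a bin chosen uniformly at random among the n bins. If m ≥ 8·n·ln(n/δ) and n ≥ δ, then with probability at least 1 − δ every one of the n bins receives at least m/(2n) balls. -/
open Finset

/-- Chernoff bound for a single bin: the number of assignments `π : Fin m → Fin n`
under which bin `u` gets fewer than `m/(2n)` balls is at most `(δ/n)·n^m`. -/
lemma perbin_chernoff (n : ℕ) (hn : 1 ≤ n) (δ : ℝ) (hδ0 : 0 < δ)
    (m : ℕ) (hm : 8 * (n : ℝ) * Real.log ((n : ℝ) / δ) ≤ (m : ℝ)) (hnδ : δ ≤ (n : ℝ))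
    (u : Fin n) :
    ((Finset.univ.filter (fun π : Fin m → Fin n =>
        ¬ ((m : ℝ) / (2 * n) ≤ ((Finset.univ.filter (fun i : Fin m => π i = u)).card : ℝ)))).card : ℝ)
      ≤ δ / n * (n : ℝ) ^ m := by
  have hn0 : (0 : ℝ) < n := by exact_mod_cast hn
  set c : ℝ := Real.exp (-(1/2 : ℝ)) with hc
  have hc0 : 0 < c := Real.exp_pos _
  have hc58 : c ≤ 5/8 := by
    have h1 : Real.exp (1/2:ℝ) * Real.exp (1/2:ℝ) = Real.exp 1 := by
      rw [← Real.exp_add]; norm_num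
    have h2 := Real.exp_one_gt_d9
    have h3 := Real.exp_pos (1/2:ℝ)
    have h4 : c * Real.exp (1/2:ℝ) = 1 := by
      rw [hc, ← Real.exp_add]; norm_num
    nlinarith
  set a : ℝ := (m : ℝ) / (2 * n) with ha
  set X : (Fin m → Fin n) → ℕ := fun π => (Finset.univ.filter (fun i : Fin m => π i = u)).card
    with hX
  -- pointwise indicator bound
  have hpt : ∀ π : Fin m → Fin n, ¬ (a ≤ (X π : ℝ)) →
      (1 : ℝ) ≤ Real.exp (a/2) * c ^ (X π) := by
    intro π hπ
    push_neg at hπ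
    have : c ^ (X π) = Real.exp (-(1/2) * (X π : ℝ)) := by
      rw [mul_comm, Real.exp_nat_mul]
    rw [this, ← Real.exp_add]
    have : (0:ℝ) ≤ a/2 + (-(1/2) * (X π : ℝ)) := by nlinarith
    calc (1:ℝ) = Real.exp 0 := by simp
      _ ≤ _ := Real.exp_le_exp.mpr this
  -- product form of c^(X π)
  have hprod : ∀ π : Fin m → Fin n,
      (∏ i, (if π i = u then c else 1)) = c ^ (X π) := by
    intro π
    rw [Finset.prod_ite, Finset.prod_const, Finset.prod_const, one_pow, mul_one]
  -- sum over all π of c^(X π)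
  have hsum : ∑ π : Fin m → Fin n, c ^ (X π) = ((n : ℝ) - 1 + c) ^ m := by
    have h1 : ∑ π : Fin m → Fin n, c ^ (X π)
        = ∑ π : Fin m → Fin n, ∏ i, (if π i = u then c else 1) := by
      exact Finset.sum_congr rfl (fun π _ => (hprod π).symm)
    have h2 : ∑ π : Fin m → Fin n, ∏ i, (if π i = u then c else 1)
        = (∑ v : Fin n, (if v = u then c else 1)) ^ m := by
      rw [← Fintype.piFinset_univ,
        ← Finset.prod_univ_sum (fun _ : Fin m => (univ : Finset (Fin n)))
          (fun _ v => if v = u then c else 1)]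
      simp
    have h3 : (∑ v : Fin n, (if v = u then c else 1)) = (n : ℝ) - 1 + c := by
      have : ∀ v : Fin n, (if v = u then c else 1) = 1 + (if v = u then c - 1 else 0) := by
        intro v; split <;> ring
      simp only [this, Finset.sum_add_distrib, Finset.sum_const, Finset.sum_ite_eq',
        Finset.mem_univ, if_true, Finset.card_univ, Fintype.card_fin, nsmul_eq_mul, mul_one]
      ring
    rw [h1, h2, h3]
  -- counting bound
  have hcount : ((Finset.univ.filter (fun π : Fin m → Fin n => ¬ (a ≤ (X π : ℝ)))).card : ℝ)
      ≤ Real.exp (a/2) * ((n : ℝ) - 1 + c) ^ m := by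
    calc ((Finset.univ.filter (fun π : Fin m → Fin n => ¬ (a ≤ (X π : ℝ)))).card : ℝ)
        = ∑ π ∈ Finset.univ.filter (fun π : Fin m → Fin n => ¬ (a ≤ (X π : ℝ))), (1 : ℝ) := by
          simp
      _ ≤ ∑ π ∈ Finset.univ.filter (fun π : Fin m → Fin n => ¬ (a ≤ (X π : ℝ))),
            Real.exp (a/2) * c ^ (X π) := by
          apply Finset.sum_le_sum
          intro π hπ
          exact hpt π (Finset.mem_filter.mp hπ).2
      _ ≤ ∑ π : Fin m → Fin n, Real.exp (a/2) * c ^ (X π) := by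
          apply Finset.sum_le_sum_of_subset_of_nonneg (Finset.filter_subset _ _)
          intro π _ _
          positivity
      _ = Real.exp (a/2) * ((n : ℝ) - 1 + c) ^ m := by
          rw [← Finset.mul_sum, hsum]
  -- analytic bound
  have hlog0 : 0 ≤ Real.log ((n : ℝ) / δ) := by
    apply Real.log_nonneg
    rw [le_div_iff₀ hδ0]; linarith
  have hbase : (n : ℝ) - 1 + c ≤ (n : ℝ) * Real.exp (-(1 - c) / n) := by
    have h := Real.add_one_le_exp (-(1 - c) / n)
    have := mul_le_mul_of_nonneg_left h (le_of_lt hn0)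
    calc (n : ℝ) - 1 + c = (n : ℝ) * (-(1 - c) / n + 1) := by field_simp; ring
      _ ≤ (n : ℝ) * Real.exp (-(1 - c) / n) := this
  have hpow : ((n : ℝ) - 1 + c) ^ m ≤ (n : ℝ) ^ m * Real.exp (-(1 - c) * m / n) := by
    have h1 : ((n : ℝ) - 1 + c) ^ m ≤ ((n : ℝ) * Real.exp (-(1 - c) / n)) ^ m := by
      apply pow_le_pow_left₀ _ hbase
      have : (1:ℝ) ≤ n := by exact_mod_cast hn
      linarith
    calc ((n : ℝ) - 1 + c) ^ m ≤ ((n : ℝ) * Real.exp (-(1 - c) / n)) ^ m := h1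
      _ = (n : ℝ) ^ m * Real.exp (-(1 - c) / n) ^ m := by rw [mul_pow]
      _ = (n : ℝ) ^ m * Real.exp (-(1 - c) * m / n) := by
          rw [← Real.exp_nat_mul]; ring_nf
  have hexp : Real.exp (a/2) * Real.exp (-(1 - c) * m / n) ≤ δ / n := by
    rw [← Real.exp_add]
    have hkey : a/2 + -(1 - c) * m / n ≤ -Real.log ((n : ℝ) / δ) := by
      have ha2 : a/2 = (m : ℝ) / (4 * n) := by rw [ha]; ring
      rw [ha2]
      rw [div_add_div _ _ (by positivity : (4:ℝ) * n ≠ 0) (by positivity : (n:ℝ) ≠ 0)]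
      rw [div_le_iff₀ (by positivity : (0:ℝ) < 4 * n * n)]
      -- need: m*n + (4n)*(-(1-c)*m) ≤ -log(n/δ) * (4n*n)
      -- i.e. m*n*(1 - 4(1-c)) ≤ ..., with 1 - 4(1-c) = 4c - 3 ≤ -1/2
      have hm0 : (0:ℝ) ≤ (m:ℝ) := Nat.cast_nonneg m
      have hmn : 8 * (n:ℝ) * Real.log ((n:ℝ)/δ) * n ≤ (m:ℝ) * n :=
        mul_le_mul_of_nonneg_right hm (le_of_lt hn0)
      have hprod2 : 0 ≤ (3 - 4*c) * ((m:ℝ) * n - 8 * n * Real.log ((n:ℝ)/δ) * n) :=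
        mul_nonneg (by linarith) (by linarith)
      nlinarith [mul_nonneg hm0 (le_of_lt hn0)]
    calc Real.exp (a/2 + -(1 - c) * m / n) ≤ Real.exp (-Real.log ((n : ℝ) / δ)) :=
        Real.exp_le_exp.mpr hkey
      _ = δ / n := by
          rw [Real.exp_neg, Real.exp_log (by positivity)]
          rw [inv_div]
  calc ((Finset.univ.filter (fun π : Fin m → Fin n => ¬ (a ≤ (X π : ℝ)))).card : ℝ)
      ≤ Real.exp (a/2) * ((n : ℝ) - 1 + c) ^ m := hcount
    _ ≤ Real.exp (a/2) * ((n : ℝ) ^ m * Real.exp (-(1 - c) * m / n)) := by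
        apply mul_le_mul_of_nonneg_left hpow (le_of_lt (Real.exp_pos _))
    _ = Real.exp (a/2) * Real.exp (-(1 - c) * m / n) * (n : ℝ) ^ m := by ring
    _ ≤ δ / n * (n : ℝ) ^ m := by
        apply mul_le_mul_of_nonneg_right hexp (by positivity)

/-- Balls in bins: if `m ≥ 8 n ln(n/δ)` balls are thrown uniformly and independently
into `n` bins, then with probability `≥ 1-δ` every bin receives `≥ m/(2n)` balls. -/
theorem stmt_7 (n : ℕ) (hn : 1 ≤ n) (δ : ℝ) (hδ0 : 0 < δ) (hδ1 : δ ≤ 1)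
    (m : ℕ) (hm : 8 * (n : ℝ) * Real.log ((n : ℝ) / δ) ≤ (m : ℝ)) (hnδ : δ ≤ (n : ℝ)) :
    1 - δ ≤ ((Finset.univ.filter
        (fun π : Fin m → Fin n => ∀ u : Fin n,
          (m : ℝ) / (2 * n) ≤ ((Finset.univ.filter (fun i : Fin m => π i = u)).card : ℝ))).card : ℝ) /
      (n : ℝ) ^ m := by
  have hn0 : (0 : ℝ) < n := by exact_mod_cast hn
  set G : Finset (Fin m → Fin n) := Finset.univ.filter
      (fun π : Fin m → Fin n => ∀ u : Fin n,
        (m : ℝ) / (2 * n) ≤ ((Finset.univ.filter (fun i : Fin m => π i = u)).card : ℝ)) with hG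
  set B : Fin n → Finset (Fin m → Fin n) := fun u => Finset.univ.filter
      (fun π : Fin m → Fin n =>
        ¬ ((m : ℝ) / (2 * n) ≤ ((Finset.univ.filter (fun i : Fin m => π i = u)).card : ℝ)))
    with hB
  have hsub : (Finset.univ \ G) ⊆ Finset.univ.biUnion B := by
    intro π hπ
    rw [Finset.mem_sdiff, hG, Finset.mem_filter] at hπ
    push_neg at hπ
    obtain ⟨u, hu⟩ := hπ.2 (Finset.mem_univ π)
    exact Finset.mem_biUnion.mpr ⟨u, Finset.mem_univ u, by
      rw [hB]; exact Finset.mem_filter.mpr ⟨Finset.mem_univ π, not_le.mpr hu⟩⟩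
  have hcardB : ∀ u : Fin n, ((B u).card : ℝ) ≤ δ / n * (n : ℝ) ^ m := fun u =>
    perbin_chernoff n hn δ hδ0 m hm hnδ u
  have htotal : (Finset.univ : Finset (Fin m → Fin n)).card = n ^ m := by
    rw [Finset.card_univ, Fintype.card_fun]; simp
  have hsdiff : ((Finset.univ \ G).card : ℝ) ≤ δ * (n : ℝ) ^ m := by
    calc ((Finset.univ \ G).card : ℝ) ≤ ((Finset.univ.biUnion B).card : ℝ) := by
          exact_mod_cast Finset.card_le_card hsub
      _ ≤ ((∑ u : Fin n, (B u).card : ℕ) : ℝ) := by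
          exact_mod_cast Finset.card_biUnion_le
      _ = ∑ u : Fin n, ((B u).card : ℝ) := by push_cast; ring
      _ ≤ ∑ u : Fin n, δ / n * (n : ℝ) ^ m := Finset.sum_le_sum (fun u _ => hcardB u)
      _ = (n : ℝ) * (δ / n * (n : ℝ) ^ m) := by
          rw [Finset.sum_const, Finset.card_univ, Fintype.card_fin, nsmul_eq_mul]
      _ = δ * (n : ℝ) ^ m := by field_simp
  have hGcard : (1 - δ) * (n : ℝ) ^ m ≤ (G.card : ℝ) := by
    have h1 : (Finset.univ \ G).card = n ^ m - G.card := by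
      rw [Finset.card_sdiff_of_subset (Finset.subset_univ G), htotal]
    have h2 : G.card ≤ n ^ m := by
      rw [← htotal]; exact Finset.card_le_card (Finset.subset_univ G)
    have h3 : ((n ^ m - G.card : ℕ) : ℝ) = (n : ℝ) ^ m - (G.card : ℝ) := by
      push_cast [Nat.cast_sub h2]; ring
    rw [h1, h3] at hsdiff
    linarith
  rw [le_div_iff₀ (by positivity : (0:ℝ) < (n : ℝ) ^ m)]
  exact hGcard
end

section
/- Let V be a finite set with |V| = n ≥ 1, let N_1, …, N_m : V → A be labelings, let 1/2 < γ ≤ 1 and 0 < δ ≤ 1 be reals, and suppose there is a fixed labeling N* : V → A such that |{i : N_i = N*}| ≥ γ·m. Assign to each i ∈ {1,…,m} an independent uniformly random node π(i) ∈ V, and for u ∈ V set T_u = {i : π(i) = u}; for i ∈ T_u set NCount(i,u) = |{j ∈ T_u : j ≠ i and N_j(u) = N_i(u)}|. There is an absolute constant c > 0 such that if m ≥ c·n·ln(n·m/δ)/(2γ−1)², then with probability at least 1 − δ the following holds simultaneously for every u ∈ V and all i, j ∈ T_u with N_i(u) = N*(u) and N_j(u) ≠ N*(u): NCount(i,u)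 > NCount(j,u). -/
open Finset

set_option maxHeartbeats 1000000

lemma chernoff_count (V : Type) [Fintype V] [DecidableEq V] (hV : 1 ≤ Fintype.card V)
    (m : ℕ) (u : V) (G : Finset (Fin m)) (t : ℝ) (ht : 0 ≤ t) :
    ((Finset.univ.filter (fun π : Fin m → V =>
        (Finset.univ.filter (fun i => π i = u ∧ i ∈ G)).card ≤
        (Finset.univ.filter (fun i => π i = u ∧ i ∉ G)).card)).card : ℝ) ≤
    (Fintype.card V : ℝ) ^ m *
      Real.exp (((G.card : ℝ) * (Real.exp (-t) - 1) + ((Gᶜ.card : ℝ)) * (Real.exp t - 1))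
        / (Fintype.card V : ℝ)) := by
  classical
  have hn0 : (0:ℝ) < (Fintype.card V : ℝ) := by exact_mod_cast hV
  set n : ℕ := Fintype.card V with hn
  set f : Fin m → V → ℝ := fun i v => Real.exp (if v = u then (if i ∈ G then -t else t) else 0)
    with hf
  have hfpos : ∀ i v, 0 < f i v := fun i v => Real.exp_pos _
  have stepA : ((Finset.univ.filter (fun π : Fin m → V =>
        (Finset.univ.filter (fun i => π i = u ∧ i ∈ G)).card ≤
        (Finset.univ.filter (fun i => π i = u ∧ i ∉ G)).card)).card : ℝ) ≤
      ∑ π : Fin m → V, ∏ i, f i (π i) := by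
    have h1 : ∀ π ∈ (Finset.univ.filter (fun π : Fin m → V =>
        (Finset.univ.filter (fun i => π i = u ∧ i ∈ G)).card ≤
        (Finset.univ.filter (fun i => π i = u ∧ i ∉ G)).card)), (1:ℝ) ≤ ∏ i, f i (π i) := by
      intro π hπ
      rw [Finset.mem_filter] at hπ
      have hcard := hπ.2
      have hprod : ∏ i, f i (π i) =
          Real.exp (∑ i, (if π i = u then (if i ∈ G then -t else t) else 0)) := by
        rw [Real.exp_sum]
      rw [hprod]
      have h10 : (1:ℝ) = Real.exp 0 := by simp
      rw [h10]
      apply Real.exp_le_exp.mpr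
      have key : ∀ i : Fin m, (if π i = u then (if i ∈ G then -t else t) else 0)
          = (if π i = u ∧ i ∈ G then (-t) else 0) + (if π i = u ∧ i ∉ G then t else 0) := by
        intro i
        by_cases h1 : π i = u <;> by_cases h2 : i ∈ G <;> simp [h1, h2]
      rw [Finset.sum_congr rfl (fun i _ => key i), Finset.sum_add_distrib,
        ← Finset.sum_filter, ← Finset.sum_filter, Finset.sum_const, Finset.sum_const,
        nsmul_eq_mul, nsmul_eq_mul]
      have hc : ((Finset.univ.filter (fun i => π i = u ∧ i ∈ G)).card : ℝ) ≤
          ((Finset.univ.filter (fun i => π i = u ∧ i ∉ G)).card : ℝ) := by exact_mod_cast hcard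
      nlinarith
    calc ((Finset.univ.filter (fun π : Fin m → V =>
        (Finset.univ.filter (fun i => π i = u ∧ i ∈ G)).card ≤
        (Finset.univ.filter (fun i => π i = u ∧ i ∉ G)).card)).card : ℝ)
        = ∑ π ∈ (Finset.univ.filter (fun π : Fin m → V =>
        (Finset.univ.filter (fun i => π i = u ∧ i ∈ G)).card ≤
        (Finset.univ.filter (fun i => π i = u ∧ i ∉ G)).card)), (1:ℝ) := by
          rw [Finset.sum_const, nsmul_eq_mul, mul_one]
      _ ≤ ∑ π ∈ (Finset.univ.filter (fun π : Fin m → V =>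
        (Finset.univ.filter (fun i => π i = u ∧ i ∈ G)).card ≤
        (Finset.univ.filter (fun i => π i = u ∧ i ∉ G)).card)), ∏ i, f i (π i) :=
          Finset.sum_le_sum h1
      _ ≤ ∑ π : Fin m → V, ∏ i, f i (π i) :=
          Finset.sum_le_sum_of_subset_of_nonneg (Finset.filter_subset _ _)
            (fun π _ _ => (Finset.prod_pos (fun i _ => hfpos i (π i))).le)
  refine stepA.trans ?_
  have stepB : ∑ π : Fin m → V, ∏ i, f i (π i) = ∏ i, ∑ v : V, f i v := by
    rw [Finset.prod_univ_sum, Fintype.piFinset_univ]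
  rw [stepB]
  have stepC : ∀ i : Fin m, ∑ v : V, f i v = (n:ℝ) - 1 + Real.exp (if i ∈ G then -t else t) := by
    intro i
    have hv : ∀ v : V, f i v =
        (if v = u then Real.exp (if i ∈ G then -t else t) - 1 else 0) + 1 := by
      intro v
      by_cases h : v = u <;> simp [hf, h]
    rw [Finset.sum_congr rfl (fun v _ => hv v), Finset.sum_add_distrib,
      Finset.sum_ite_eq' Finset.univ u, Finset.sum_const, Finset.card_univ, nsmul_eq_mul, mul_one]
    simp only [Finset.mem_univ, if_true]
    rw [← hn]
    ring
  rw [Finset.prod_congr rfl (fun i _ => stepC i)]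
  have stepD : ∀ i : Fin m, (n:ℝ) - 1 + Real.exp (if i ∈ G then -t else t) ≤
      (n:ℝ) * Real.exp ((Real.exp (if i ∈ G then -t else t) - 1) / n) := by
    intro i
    set c : ℝ := Real.exp (if i ∈ G then -t else t) with hc
    have h1 : 1 + (c - 1)/n ≤ Real.exp ((c-1)/n) := by
      have := Real.add_one_le_exp ((c-1)/n); linarith
    calc (n:ℝ) - 1 + c = n * (1 + (c-1)/n) := by field_simp; ring
      _ ≤ n * Real.exp ((c-1)/n) := mul_le_mul_of_nonneg_left h1 hn0.le
  calc ∏ i : Fin m, ((n:ℝ) - 1 + Real.exp (if i ∈ G then -t else t))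
      ≤ ∏ i : Fin m, (n:ℝ) * Real.exp ((Real.exp (if i ∈ G then -t else t) - 1) / n) := by
        refine Finset.prod_le_prod (fun i _ => ?_) (fun i _ => stepD i)
        have h2 := Real.exp_pos (if i ∈ G then -t else t)
        have h3 : (1:ℝ) ≤ (n:ℝ) := by exact_mod_cast hV
        linarith
    _ = (n:ℝ)^m * Real.exp (∑ i : Fin m, (Real.exp (if i ∈ G then -t else t) - 1) / n) := by
        rw [Finset.prod_mul_distrib, Finset.prod_const, Finset.card_univ, Fintype.card_fin,
          Real.exp_sum]
    _ = (n:ℝ)^m * Real.exp (((G.card : ℝ) * (Real.exp (-t) - 1) +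
          ((Gᶜ.card : ℝ)) * (Real.exp t - 1)) / n) := by
        congr 1
        rw [← Finset.sum_div]
        congr 1
        rw [← Finset.sum_add_sum_compl G
          (fun i => Real.exp (if i ∈ G then -t else t) - 1)]
        have e1 : ∑ i ∈ G, (Real.exp (if i ∈ G then -t else t) - 1)
            = (G.card:ℝ) * (Real.exp (-t) - 1) := by
          rw [Finset.sum_congr rfl (fun i hi => by rw [if_pos hi]), Finset.sum_const,
            nsmul_eq_mul]
        have e2 : ∑ i ∈ Gᶜ, (Real.exp (if i ∈ G then -t else t) - 1)
            = (Gᶜ.card:ℝ) * (Real.exp t - 1) := by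
          rw [Finset.sum_congr rfl (fun i hi => by
            rw [if_neg (Finset.mem_compl.mp hi)]), Finset.sum_const, nsmul_eq_mul]
        rw [e1, e2]

lemma reduction_lemma {V A : Type} [Fintype V] [DecidableEq V] [DecidableEq A] {m : ℕ}
    (N : Fin m → V → A) (Nstar : V → A) (G : Finset (Fin m))
    (hG : ∀ i, i ∈ G ↔ N i = Nstar) (π : Fin m → V)
    (h : ∀ u : V, (Finset.univ.filter (fun i => π i = u ∧ i ∉ G)).card <
        (Finset.univ.filter (fun i => π i = u ∧ i ∈ G)).card) :
    ∀ u : V, ∀ i j : Fin m, π i = u → π j = u →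
      N i u = Nstar u → N j u ≠ Nstar u →
      (Finset.univ.filter (fun j' : Fin m =>
          π j' = u ∧ j' ≠ j ∧ N j' u = N j u)).card <
      (Finset.univ.filter (fun i' : Fin m =>
          π i' = u ∧ i' ≠ i ∧ N i' u = N i u)).card := by
  intro u i j hi hj hNi hNj
  classical
  set B := Finset.univ.filter (fun i' => π i' = u ∧ i' ∉ G) with hB
  set X := Finset.univ.filter (fun i' => π i' = u ∧ i' ∈ G) with hX
  have hjB : j ∈ B := by
    rw [hB, Finset.mem_filter]
    refine ⟨Finset.mem_univ _, hj, fun hjG => ?_⟩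
    exact hNj (by rw [(hG j).mp hjG])
  have hLB : (Finset.univ.filter (fun j' : Fin m =>
      π j' = u ∧ j' ≠ j ∧ N j' u = N j u)) ⊆ B.erase j := by
    intro j' hj'
    rw [Finset.mem_filter] at hj'
    obtain ⟨-, hπ, hne, hNeq⟩ := hj'
    rw [Finset.mem_erase, hB, Finset.mem_filter]
    refine ⟨hne, Finset.mem_univ _, hπ, fun hj'G => ?_⟩
    exact hNj (by rw [← hNeq, (hG j').mp hj'G])
  have h1 : (Finset.univ.filter (fun j' : Fin m =>
      π j' = u ∧ j' ≠ j ∧ N j' u = N j u)).card ≤ B.card - 1 := by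
    refine le_trans (Finset.card_le_card hLB) ?_
    rw [Finset.card_erase_of_mem hjB]
  have hBpos : 1 ≤ B.card := Finset.card_pos.mpr ⟨j, hjB⟩
  have hXR : X.erase i ⊆ (Finset.univ.filter (fun i' : Fin m =>
      π i' = u ∧ i' ≠ i ∧ N i' u = N i u)) := by
    intro i' hi'
    rw [Finset.mem_erase] at hi'
    obtain ⟨hne, hi'X⟩ := hi'
    rw [hX, Finset.mem_filter] at hi'X
    obtain ⟨-, hπ, hiG⟩ := hi'X
    rw [Finset.mem_filter]
    exact ⟨Finset.mem_univ _, hπ, hne, by rw [(hG i').mp hiG, hNi]⟩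
  have h2 : X.card - 1 ≤ (Finset.univ.filter (fun i' : Fin m =>
      π i' = u ∧ i' ≠ i ∧ N i' u = N i u)).card :=
    le_trans (Finset.pred_card_le_card_erase) (Finset.card_le_card hXR)
  have h3 : B.card < X.card := h u
  omega

/-- There is an absolute constant `c > 0` such that if a `γ`-fraction (`γ > 1/2`) of the
labelings equal `N*` and `m ≥ c·n·ln(nm/δ)/(2γ-1)²`, then with probability `≥ 1-δ` over
a uniform random assignment `π` of entities to nodes, for every node `u` the entities in
`T_u` agreeing with `N*` at `u` have strictly larger `NCount` than those disagreeing. -/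
theorem stmt_9 : ∃ c : ℝ, 0 < c ∧
    ∀ (V : Type) (A : Type), ∀ (_ : Fintype V) (_ : DecidableEq V) (_ : DecidableEq A),
    ∀ (n : ℕ), 1 ≤ n → Fintype.card V = n →
    ∀ (m : ℕ) (N : Fin m → V → A) (Nstar : V → A) (γ δ : ℝ),
      1 / 2 < γ → γ ≤ 1 → 0 < δ → δ ≤ 1 →
      γ * m ≤ ((Finset.univ.filter (fun i : Fin m => N i = Nstar)).card : ℝ) →
      c * n * Real.log ((n : ℝ) * m / δ) / (2 * γ - 1) ^ 2 ≤ (m : ℝ) →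
      1 - δ ≤ ((Finset.univ.filter (fun π : Fin m → V =>
          ∀ u : V, ∀ i j : Fin m, π i = u → π j = u →
            N i u = Nstar u → N j u ≠ Nstar u →
            (Finset.univ.filter (fun j' : Fin m =>
                π j' = u ∧ j' ≠ j ∧ N j' u = N j u)).card <
            (Finset.univ.filter (fun i' : Fin m =>
                π i' = u ∧ i' ≠ i ∧ N i' u = N i u)).card)).card : ℝ) /
        (n : ℝ) ^ m := by
  classical
  refine ⟨8, by norm_num, ?_⟩
  intro V A instF instDV instDA n hn hcard m N Nstar γ δ hγ hγ1 hδ hδ1 hGcard hm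
  have hn0 : (0:ℝ) < (n:ℝ) := by exact_mod_cast hn
  have hnm0 : (0:ℝ) < (n:ℝ)^m := pow_pos hn0 m
  rcases Nat.eq_zero_or_pos m with hm0 | hm1
  · subst hm0
    have hfull : (Finset.univ.filter (fun π : Fin 0 → V =>
        ∀ u : V, ∀ i j : Fin 0, π i = u → π j = u →
          N i u = Nstar u → N j u ≠ Nstar u →
          (Finset.univ.filter (fun j' : Fin 0 =>
              π j' = u ∧ j' ≠ j ∧ N j' u = N j u)).card <
          (Finset.univ.filter (fun i' : Fin 0 =>
              π i' = u ∧ i' ≠ i ∧ N i' u = N i u)).card)) = Finset.univ := by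
      refine Finset.filter_true_of_mem (fun π _ => ?_)
      intro u i j
      exact i.elim0
    rw [hfull, Finset.card_univ]
    have hcf : Fintype.card (Fin 0 → V) = 1 := by
      rw [Fintype.card_fun]
      simp
    rw [hcf, pow_zero]
    norm_num
    linarith
  set ε : ℝ := 2*γ - 1 with hε
  have hε0 : 0 < ε := by rw [hε]; linarith
  have hε1 : ε ≤ 1 := by rw [hε]; linarith
  set t : ℝ := ε/4 with htdef
  have ht0 : 0 ≤ t := by positivity
  set G : Finset (Fin m) := Finset.univ.filter (fun i : Fin m => N i = Nstar) with hGdef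
  have hGiff : ∀ i, i ∈ G ↔ N i = Nstar := by
    intro i; rw [hGdef, Finset.mem_filter]; simp
  have hGm : G.card ≤ m := by
    simpa using Finset.card_le_univ G
  have hb : ((Gᶜ.card : ℝ)) = (m:ℝ) - G.card := by
    rw [Finset.card_compl, Fintype.card_fin, Nat.cast_sub hGm]
  have hbb : ((Gᶜ.card : ℝ)) ≤ (1-γ)*m := by
    rw [hb]; linarith [hGcard]
  have he1 : Real.exp (-t) - 1 ≤ -t + t^2 := by
    have h1 : (t + 1) ≤ Real.exp t := Real.add_one_le_exp t
    have h2 : Real.exp (-t) * Real.exp t = 1 := by rw [← Real.exp_add]; simp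
    have h3 : Real.exp (-t) > 0 := Real.exp_pos _
    nlinarith [pow_nonneg ht0 3, mul_le_mul_of_nonneg_left h1 h3.le]
  have he2 : Real.exp t - 1 ≤ t + 2*t^2 := by
    have ht12 : t ≤ 1/2 := by rw [htdef]; linarith
    have h1 : (-t + 1) ≤ Real.exp (-t) := Real.add_one_le_exp (-t)
    have h2 : Real.exp (-t) * Real.exp t = 1 := by rw [← Real.exp_add]; simp
    have h3 : Real.exp t > 0 := Real.exp_pos _
    nlinarith [mul_le_mul_of_nonneg_left h1 h3.le]
  have heneg : Real.exp (-t) - 1 ≤ 0 := by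
    have h := Real.exp_le_exp.mpr (by linarith : -t ≤ 0)
    simpa using h
  have hepos : 0 ≤ Real.exp t - 1 := by
    have h := Real.exp_le_exp.mpr ht0
    simpa using h
  -- bound on exponent argument
  have harg : ((G.card : ℝ) * (Real.exp (-t) - 1) + ((Gᶜ.card : ℝ)) * (Real.exp t - 1)) / (n:ℝ)
      ≤ -(ε^2 * m) / (8*n) := by
    have hγm0 : (0:ℝ) ≤ γ * m := by positivity
    have step1 : (G.card : ℝ) * (Real.exp (-t) - 1) ≤ (γ*m) * (Real.exp (-t) - 1) :=
      mul_le_mul_of_nonpos_right hGcard heneg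
    have step2 : ((Gᶜ.card : ℝ)) * (Real.exp t - 1) ≤ ((1-γ)*m) * (Real.exp t - 1) :=
      mul_le_mul_of_nonneg_right hbb hepos
    have step3 : (γ*m) * (Real.exp (-t) - 1) ≤ (γ*m) * (-t + t^2) :=
      mul_le_mul_of_nonneg_left he1 hγm0
    have step4 : ((1-γ)*m) * (Real.exp t - 1) ≤ ((1-γ)*m) * (t + 2*t^2) := by
      have h0 : (0:ℝ) ≤ (1-γ)*m := mul_nonneg (by linarith) (Nat.cast_nonneg m)
      exact mul_le_mul_of_nonneg_left he2 h0
    have step5 : (γ*m) * (-t + t^2) + ((1-γ)*m) * (t + 2*t^2) ≤ -(ε^2 * m)/8 := by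
      rw [htdef, hε]
      have hm0' : (0:ℝ) ≤ m := Nat.cast_nonneg m
      nlinarith [mul_nonneg hm0' (mul_nonneg (by linarith : (0:ℝ) ≤ γ) (sq_nonneg (2*γ-1)))]
    have lhs_le : (G.card : ℝ) * (Real.exp (-t) - 1) + ((Gᶜ.card : ℝ)) * (Real.exp t - 1)
        ≤ -(ε^2 * m)/8 := by linarith
    rw [div_le_div_iff₀ hn0 (by positivity)]
    calc ((G.card : ℝ) * (Real.exp (-t) - 1) + ((Gᶜ.card : ℝ)) * (Real.exp t - 1)) * (8*n)
        ≤ (-(ε^2 * m)/8) * (8*n) := mul_le_mul_of_nonneg_right lhs_le (by positivity)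
      _ = -(ε^2 * m) * n := by ring
  -- exp bound vs δ/n
  have hexp : Real.exp (-(ε^2 * m) / (8*(n:ℝ))) ≤ δ/n := by
    have hεsq : (0:ℝ) < ε^2 := by positivity
    rw [div_le_iff₀ hεsq] at hm
    have hm1' : (1:ℝ) ≤ (m:ℝ) := by exact_mod_cast hm1
    have hfr : (n:ℝ)/δ ≤ (n:ℝ)*m/δ :=
      (div_le_div_iff_of_pos_right hδ).mpr (by nlinarith)
    have hlognm : Real.log ((n:ℝ)/δ) ≤ Real.log ((n:ℝ)*m/δ) :=
      Real.log_le_log (by positivity) hfr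
    have hkey : Real.log ((n:ℝ)/δ) ≤ ε^2 * m/(8*n) := by
      have h2 : Real.log ((n:ℝ)*m/δ) ≤ ε^2 * m/(8*n) := by
        rw [le_div_iff₀ (by positivity)]
        nlinarith [hm]
      linarith
    calc Real.exp (-(ε^2 * m) / (8*(n:ℝ)))
        ≤ Real.exp (-Real.log ((n:ℝ)/δ)) := by
          apply Real.exp_le_exp.mpr
          rw [neg_div]
          linarith
      _ = δ/n := by
          rw [← Real.log_inv, Real.exp_log (by positivity), inv_div]
  -- per-node Chernoff bound
  have hchern : ∀ u : V, ((Finset.univ.filter (fun π : Fin m → V =>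
      (Finset.univ.filter (fun i => π i = u ∧ i ∈ G)).card ≤
      (Finset.univ.filter (fun i => π i = u ∧ i ∉ G)).card)).card : ℝ) ≤
      (n:ℝ)^m * (δ/n) := by
    intro u
    have h := chernoff_count V (by rw [hcard]; exact hn) m u G t ht0
    rw [hcard] at h
    refine h.trans ?_
    apply mul_le_mul_of_nonneg_left ?_ (by positivity)
    exact le_trans (Real.exp_le_exp.mpr harg) hexp
  -- union bound
  set Q : (Fin m → V) → Prop := fun π => ∀ u : V,
      (Finset.univ.filter (fun i => π i = u ∧ i ∉ G)).card <
      (Finset.univ.filter (fun i => π i = u ∧ i ∈ G)).card with hQ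
  have hsub : Finset.univ.filter (fun π : Fin m → V => ¬ Q π) ⊆
      Finset.univ.biUnion (fun u : V => Finset.univ.filter (fun π : Fin m → V =>
        (Finset.univ.filter (fun i => π i = u ∧ i ∈ G)).card ≤
        (Finset.univ.filter (fun i => π i = u ∧ i ∉ G)).card)) := by
    intro π hπ
    rw [Finset.mem_filter] at hπ
    have hnq := hπ.2
    simp only [hQ, not_forall, not_lt] at hnq
    obtain ⟨u, hu⟩ := hnq
    rw [Finset.mem_biUnion]
    exact ⟨u, Finset.mem_univ _, Finset.mem_filter.mpr ⟨Finset.mem_univ _, hu⟩⟩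
  have hbadcard : ((Finset.univ.filter (fun π : Fin m → V => ¬ Q π)).card : ℝ) ≤ δ * (n:ℝ)^m := by
    have h1 : (Finset.univ.filter (fun π : Fin m → V => ¬ Q π)).card ≤
        ∑ u : V, (Finset.univ.filter (fun π : Fin m → V =>
          (Finset.univ.filter (fun i => π i = u ∧ i ∈ G)).card ≤
          (Finset.univ.filter (fun i => π i = u ∧ i ∉ G)).card)).card :=
      le_trans (Finset.card_le_card hsub) (Finset.card_biUnion_le)
    have h2 : ((Finset.univ.filter (fun π : Fin m → V => ¬ Q π)).card : ℝ) ≤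
        ∑ u : V, ((Finset.univ.filter (fun π : Fin m → V =>
          (Finset.univ.filter (fun i => π i = u ∧ i ∈ G)).card ≤
          (Finset.univ.filter (fun i => π i = u ∧ i ∉ G)).card)).card : ℝ) := by
      rw [← Nat.cast_sum]
      exact_mod_cast h1
    refine h2.trans ?_
    calc ∑ u : V, ((Finset.univ.filter (fun π : Fin m → V =>
          (Finset.univ.filter (fun i => π i = u ∧ i ∈ G)).card ≤
          (Finset.univ.filter (fun i => π i = u ∧ i ∉ G)).card)).card : ℝ)
        ≤ ∑ _u : V, (n:ℝ)^m * (δ/n) := Finset.sum_le_sum (fun u _ => hchern u)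
      _ = (n:ℝ) * ((n:ℝ)^m * (δ/n)) := by
          rw [Finset.sum_const, Finset.card_univ, hcard, nsmul_eq_mul]
      _ = δ * (n:ℝ)^m := by field_simp
  -- assemble
  have hsplit : (Finset.univ.filter Q).card +
      (Finset.univ.filter (fun π : Fin m → V => ¬ Q π)).card = n^m := by
    rw [Finset.card_filter_add_card_filter_not, Finset.card_univ, Fintype.card_fun,
      Fintype.card_fin, hcard]
  have hQsub : Finset.univ.filter Q ⊆ (Finset.univ.filter (fun π : Fin m → V =>
      ∀ u : V, ∀ i j : Fin m, π i = u → π j = u →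
        N i u = Nstar u → N j u ≠ Nstar u →
        (Finset.univ.filter (fun j' : Fin m =>
            π j' = u ∧ j' ≠ j ∧ N j' u = N j u)).card <
        (Finset.univ.filter (fun i' : Fin m =>
            π i' = u ∧ i' ≠ i ∧ N i' u = N i u)).card)) := by
    intro π hπ
    rw [Finset.mem_filter] at hπ ⊢
    exact ⟨Finset.mem_univ _, reduction_lemma N Nstar G hGiff π hπ.2⟩
  have hfinal : (1 - δ) * (n:ℝ)^m ≤ ((Finset.univ.filter (fun π : Fin m → V =>
      ∀ u : V, ∀ i j : Fin m, π i = u → π j = u →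
        N i u = Nstar u → N j u ≠ Nstar u →
        (Finset.univ.filter (fun j' : Fin m =>
            π j' = u ∧ j' ≠ j ∧ N j' u = N j u)).card <
        (Finset.univ.filter (fun i' : Fin m =>
            π i' = u ∧ i' ≠ i ∧ N i' u = N i u)).card)).card : ℝ) := by
    have hQcard : ((Finset.univ.filter Q).card : ℝ) ≤ ((Finset.univ.filter (fun π : Fin m → V =>
        ∀ u : V, ∀ i j : Fin m, π i = u → π j = u →
          N i u = Nstar u → N j u ≠ Nstar u →
          (Finset.univ.filter (fun j' : Fin m =>
              π j' = u ∧ j' ≠ j ∧ N j' u = N j u)).card <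
          (Finset.univ.filter (fun i' : Fin m =>
              π i' = u ∧ i' ≠ i ∧ N i' u = N i u)).card)).card : ℝ) := by
      exact_mod_cast Finset.card_le_card hQsub
    have hsplitR : ((Finset.univ.filter Q).card : ℝ) +
        ((Finset.univ.filter (fun π : Fin m → V => ¬ Q π)).card : ℝ) = (n:ℝ)^m := by
      rw [← Nat.cast_add, hsplit, Nat.cast_pow]
    linarith
  rw [le_div_iff₀ hnm0]
  exact hfinal
end

section
/- Fix integers n ≥ 1, 1 ≤ k ≤ n, let Q ⊆ {1,…,n} with |Q| = q, and let g : {0,1}^n → Bool be any function that depends only on the coordinates in Q (i.e., g(x) = g(y) whenever x_u = y_u for all u ∈ Q). Then the μ_{n,k}-probability of the event {x : g(x) = (x = 0^n)} is at most 1 − τ/2, where τ = C(n−q,k)/C(n,k). -/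
/-- The weight that the distribution `μ_{n,k}` puts on `x ∈ {0,1}^n`:
mass `1/2` on the all-zeros vector and mass `1/(2·C(n,k))` on each vector with
exactly `k` ones. -/
noncomputable def muWeight (n k : ℕ) (x : Fin n → Bool) : ℝ :=
  if x = (fun _ => false) then 1 / 2
  else if (Finset.univ.filter (fun u => x u = true)).card = k then
    1 / (2 * (n.choose k : ℝ))
  else 0

/-- The `μ_{n,k}`-probability of an event `E ⊆ {0,1}^n`. -/
noncomputable def muProb (n k : ℕ) (E : Finset (Fin n → Bool)) : ℝ :=
  ∑ x ∈ E, muWeight n k x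

lemma muWeight_nonneg (n k : ℕ) (x : Fin n → Bool) : 0 ≤ muWeight n k x := by
  unfold muWeight
  split_ifs <;> positivity

lemma card_weight_off (n k : ℕ) (Q : Finset (Fin n)) :
    (Finset.univ.filter (fun x : Fin n → Bool =>
      (Finset.univ.filter (fun u => x u = true)).card = k ∧ ∀ u ∈ Q, x u = false)).card
    = (n - Q.card).choose k := by
  have hcard : Qᶜ.card = n - Q.card := by
    simp [Finset.card_compl]
  rw [← hcard, ← Finset.card_powersetCard]
  refine Finset.card_bij' (fun x _ => Finset.univ.filter (fun u => x u = true))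
    (fun s _ => fun u => decide (u ∈ s)) ?_ ?_ ?_ ?_
  case refine_1 =>
    intro x hx
    simp only [Finset.mem_filter, Finset.mem_univ, true_and] at hx
    simp only [Finset.mem_powersetCard]
    refine ⟨?_, hx.1⟩
    intro u hu
    simp only [Finset.mem_filter, Finset.mem_univ, true_and] at hu
    simp only [Finset.mem_compl]
    intro hQ
    exact absurd (hx.2 u hQ) (by simp [hu])
  case refine_2 =>
    intro s hs
    simp only [Finset.mem_powersetCard] at hs
    simp only [Finset.mem_filter, Finset.mem_univ, true_and]
    constructor
    · rw [← hs.2]; congr 1; ext u; simp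
    · intro u hu
      simp only [decide_eq_false_iff_not]
      intro hus
      exact absurd (hs.1 hus) (by simp [hu])
  case refine_3 =>
    intro x hx
    funext u
    by_cases h : x u = true <;> simp [h]
  case refine_4 =>
    intro s hs
    ext u
    simp

lemma sum_weight_off (n k : ℕ) (hk1 : 1 ≤ k) (Q : Finset (Fin n)) :
    ∑ x ∈ (Finset.univ.filter (fun x : Fin n → Bool =>
      (Finset.univ.filter (fun u => x u = true)).card = k ∧ ∀ u ∈ Q, x u = false)),
      muWeight n k x = ((n - Q.card).choose k : ℝ) / (2 * (n.choose k : ℝ)) := by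
  have hval : ∀ x ∈ (Finset.univ.filter (fun x : Fin n → Bool =>
      (Finset.univ.filter (fun u => x u = true)).card = k ∧ ∀ u ∈ Q, x u = false)),
      muWeight n k x = 1 / (2 * (n.choose k : ℝ)) := by
    intro x hx
    simp only [Finset.mem_filter, Finset.mem_univ, true_and] at hx
    have hne : x ≠ (fun _ => false) := by
      intro h
      rw [h] at hx
      simp at hx
      omega
    unfold muWeight
    rw [if_neg hne, if_pos hx.1]
  rw [Finset.sum_congr rfl hval, Finset.sum_const, card_weight_off, nsmul_eq_mul]
  ring

lemma muProb_univ (n k : ℕ) (hk1 : 1 ≤ k) (hkn : k ≤ n) :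
    muProb n k Finset.univ = 1 := by
  have hC : (0:ℝ) < (n.choose k : ℝ) := by
    exact_mod_cast Nat.choose_pos hkn
  have key : ∀ x : Fin n → Bool, muWeight n k x =
      (if x = (fun _ => false) then (1:ℝ)/2 else 0) +
      (if (Finset.univ.filter (fun u => x u = true)).card = k
        then 1 / (2 * (n.choose k : ℝ)) else 0) := by
    intro x
    unfold muWeight
    by_cases h : x = (fun _ => false)
    · have : (Finset.univ.filter (fun u => x u = true)).card = 0 := by
        subst h; simp
      rw [if_pos h, if_pos h, if_neg (by omega)]
      ring
    · rw [if_neg h, if_neg h]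
      ring
  unfold muProb
  rw [Finset.sum_congr rfl (fun x _ => key x), Finset.sum_add_distrib]
  rw [Finset.sum_ite_eq' Finset.univ (fun _ => false) (fun _ => (1:ℝ)/2)]
  rw [Finset.sum_ite, Finset.sum_const, Finset.sum_const_zero]
  have hcard := card_weight_off n k (∅ : Finset (Fin n))
  simp only [Finset.notMem_empty, false_implies, implies_true, and_true,
    Finset.card_empty, Nat.sub_zero] at hcard
  rw [hcard]
  simp only [Finset.mem_univ, if_true, nsmul_eq_mul, add_zero]
  field_simp
  ring

/-- Any tester `g` reading only the coordinates in `Q` (with `|Q| = q`) is correct about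
whether `x = 0^n` with `μ_{n,k}`-probability at most `1 - τ/2`, where
`τ = C(n-q,k)/C(n,k)`. -/
theorem stmt_11 (n k : ℕ) (hn : 1 ≤ n) (hk1 : 1 ≤ k) (hkn : k ≤ n)
    (Q : Finset (Fin n)) (q : ℕ) (hQ : Q.card = q)
    (g : (Fin n → Bool) → Bool)
    (hg : ∀ x y : Fin n → Bool, (∀ u ∈ Q, x u = y u) → g x = g y) :
    muProb n k (Finset.univ.filter
        (fun x : Fin n → Bool => g x = decide (x = fun _ => false))) ≤
      1 - (((n - q).choose k : ℝ) / (n.choose k : ℝ)) / 2 := by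
  have hC : (0:ℝ) < (n.choose k : ℝ) := by exact_mod_cast Nat.choose_pos hkn
  set P : (Fin n → Bool) → Prop := fun x => g x = decide (x = fun _ => false) with hP
  have hsplit : muProb n k (Finset.univ.filter P) +
      muProb n k (Finset.univ.filter (fun x => ¬ P x)) = 1 := by
    rw [← muProb_univ n k hk1 hkn]
    unfold muProb
    exact Finset.sum_filter_add_sum_filter_not _ _ _
  have hτ1 : ((n - q).choose k : ℝ) ≤ (n.choose k : ℝ) := by
    exact_mod_cast Nat.choose_le_choose k (Nat.sub_le n q)
  -- lower bound on the error probability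
  have hF : (((n - q).choose k : ℝ) / (n.choose k : ℝ)) / 2 ≤
      muProb n k (Finset.univ.filter (fun x => ¬ P x)) := by
    by_cases hg0 : g (fun _ => false) = true
    · -- g is wrong on all weight-k vectors supported off Q
      have hsub : (Finset.univ.filter (fun x : Fin n → Bool =>
          (Finset.univ.filter (fun u => x u = true)).card = k ∧ ∀ u ∈ Q, x u = false))
          ⊆ Finset.univ.filter (fun x => ¬ P x) := by
        intro x hx
        simp only [Finset.mem_filter, Finset.mem_univ, true_and] at hx ⊢
        have hne : x ≠ (fun _ => false) := by
          intro h
          rw [h] at hx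
          simp at hx
          omega
        have hgx : g x = true := by
          rw [hg (fun _ => false) x (fun u hu => (hx.2 u hu).symm)] at hg0
          exact hg0
        simp [hP, hgx, hne]
      have := Finset.sum_le_sum_of_subset_of_nonneg hsub
        (fun x _ _ => muWeight_nonneg n k x)
      rw [sum_weight_off n k hk1 Q, hQ] at this
      unfold muProb
      refine le_trans (le_of_eq ?_) this
      rw [div_div, mul_comm]
    · -- g is wrong on the zero vector
      have h0 : (fun _ => false) ∈ Finset.univ.filter (fun x : Fin n → Bool => ¬ P x) := by
        simp only [Finset.mem_filter, Finset.mem_univ, true_and]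
        simp [hP, hg0]
      have := Finset.single_le_sum (f := muWeight n k)
        (fun x _ => muWeight_nonneg n k x) h0
      have hw0 : muWeight n k (fun _ => false) = 1/2 := by
        unfold muWeight; rw [if_pos rfl]
      unfold muProb
      rw [hw0] at this
      refine le_trans ?_ this
      have hτle1 : ((n - q).choose k : ℝ) / (n.choose k : ℝ) ≤ 1 :=
        (div_le_one hC).mpr hτ1
      linarith
  linarith
end

section
/- For all natural numbers n, q, k with q + k ≤ n, one has C(n−q,k)/C(n,k) ≥ 1 − q·k/(n−q+1) as real numbers. -/
theorem stmt_12 (n q k : ℕ) (h : q + k ≤ n) :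
    1 - ((q : ℝ) * k) / ((n : ℝ) - q + 1) ≤ ((n - q).choose k : ℝ) / (n.choose k : ℝ) := by
  induction q with
  | zero =>
      simp only [Nat.cast_zero, zero_mul, zero_div, sub_zero, Nat.sub_zero]
      rw [div_self]
      exact_mod_cast (Nat.choose_pos (by omega : k ≤ n)).ne'
  | succ q ih =>
      have hq : q + k ≤ n := by omega
      have IH := ih hq
      have hN : (0:ℝ) < (n:ℝ) - q := by
        have : (q:ℝ) + 1 ≤ n := by exact_mod_cast (by omega : q + 1 ≤ n)
        linarith
      have hkN : (k:ℝ) ≤ (n:ℝ) - q - 1 := by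
        have : (q:ℝ) + 1 + k ≤ n := by exact_mod_cast h
        linarith
      have key : (n - (q+1)).choose k * (n - q) = (n - q).choose k * (n - q - k) := by
        have h2 := Nat.choose_mul_succ_eq (n - (q+1)) k
        have e : n - (q+1) + 1 = n - q := by omega
        rw [e] at h2
        exact h2
      have keyR : ((n-(q+1)).choose k : ℝ) * ((n:ℝ) - q) =
          ((n-q).choose k : ℝ) * ((n:ℝ) - q - k) := by
        have h3 := congrArg (Nat.cast : ℕ → ℝ) key
        push_cast [Nat.cast_sub (show q ≤ n by omega),
          Nat.cast_sub (show k ≤ n - q by omega),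
          Nat.cast_sub (show q + 1 ≤ n by omega)] at h3
        linarith [h3]
      have hCn : (0:ℝ) < (n.choose k : ℝ) := by
        exact_mod_cast Nat.choose_pos (by omega : k ≤ n)
      have hratio : ((n-(q+1)).choose k : ℝ) / (n.choose k : ℝ) =
          ((n-q).choose k : ℝ) / (n.choose k : ℝ) * (((n:ℝ)-q-k)/((n:ℝ)-q)) := by
        field_simp
        linear_combination keyR
      rw [hratio]
      set A := ((n-q).choose k : ℝ) / (n.choose k : ℝ) with hA
      have h1 : (0:ℝ) < (n:ℝ) - q + 1 := by linarith
      have h2 : (1 - A) * ((n:ℝ)-q+1) ≤ (q:ℝ)*k := by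
        rw [← le_div_iff₀ h1]
        linarith [IH]
      push_cast
      have hstep : 1 - ((q:ℝ)+1) * (↑k / ((n:ℝ) - (↑q+1) + 1)) =
          (((n:ℝ) - ↑q) - ((q:ℝ)+1)*k) / ((n:ℝ) - ↑q) := by
        rw [show (n:ℝ) - (↑q+1) + 1 = (n:ℝ) - ↑q from by ring]
        field_simp [hN.ne']
      rw [mul_comm ((q:ℝ)+1) ((k:ℝ)), mul_div_assoc] at *
      have hgoal : (((n:ℝ) - ↑q) - ((q:ℝ)+1)*k) / ((n:ℝ) - ↑q) ≤
          A * (((n:ℝ)-q-k)/((n:ℝ)-q)) := by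
        rw [mul_div_assoc' A, div_le_div_iff₀ hN hN]
        nlinarith [mul_nonneg
            (by linarith : (0:ℝ) ≤ (q:ℝ)*k - (1-A)*((n:ℝ)-q+1))
            (by linarith : (0:ℝ) ≤ (n:ℝ)-q-k),
          mul_nonneg (mul_nonneg (Nat.cast_nonneg q : (0:ℝ) ≤ q)
            (Nat.cast_nonneg k)) (Nat.cast_nonneg k), hN,
          mul_nonneg (Nat.cast_nonneg q : (0:ℝ) ≤ q) (Nat.cast_nonneg k)]
      calc 1 - ((k:ℝ)) * (((q:ℝ)+1) / ((n:ℝ) - (↑q+1) + 1))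
          = (((n:ℝ) - ↑q) - ((q:ℝ)+1)*k) / ((n:ℝ) - ↑q) := by
            rw [show (n:ℝ) - (↑q+1) + 1 = (n:ℝ) - ↑q from by ring]
            field_simp [hN.ne']
        _ ≤ A * (((n:ℝ)-q-k)/((n:ℝ)-q)) := hgoal
end

section
/- Let n, q, α be real numbers with 0 < α < 1, 0 < q, and q ≤ (1−α)·n. Then (n−q)·(H(α·n/(n−q)) − H(α)) ≤ q·α·ln((1−α)/α), where H(p) = −p·ln p − (1−p)·ln(1−p) is the binary entropy function with natural logarithm (Mathlib's Real.binEntropy). -/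
open Real in
theorem stmt_14 (n q α : ℝ) (hα0 : 0 < α) (hα1 : α < 1) (hq0 : 0 < q)
    (hqn : q ≤ (1 - α) * n) :
    (n - q) * (Real.binEntropy (α * n / (n - q)) - Real.binEntropy α) ≤
      q * α * Real.log ((1 - α) / α) := by
  have h1α : (0:ℝ) < 1 - α := by linarith
  have hn : 0 < n := by nlinarith
  have hnq : 0 < n - q := by nlinarith
  set β := α * n / (n - q) with hβ
  have hβval : (n - q) * β = α * n := by rw [hβ]; field_simp
  have hαβ : α < β := by
    rw [lt_div_iff₀ hnq]; nlinarith
  have hβ1 : β ≤ 1 := by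
    rw [div_le_one hnq]; nlinarith
  set c := Real.log ((1 - α) / α) with hc
  have hclog : c = Real.log (1 - α) - Real.log α := Real.log_div (by linarith) (ne_of_gt hα0)
  set g : ℝ → ℝ := fun x => c * x - Real.binEntropy x with hg
  have hmono : StrictMonoOn g (Set.Icc α β) := by
    apply strictMonoOn_of_deriv_pos (convex_Icc α β)
    · exact (continuous_const.mul continuous_id).sub Real.binEntropy_continuous |>.continuousOn
    · intro x hx
      rw [interior_Icc] at hx
      obtain ⟨hx1, hx2⟩ := hx
      have hx0 : 0 < x := lt_trans hα0 hx1
      have hx1' : x < 1 := lt_of_lt_of_le hx2 hβ1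
      have hd : deriv g x = c - (Real.log (1 - x) - Real.log x) := by
        have := (((hasDerivAt_id x).const_mul c).sub
          (Real.hasDerivAt_binEntropy (ne_of_gt hx0) (ne_of_lt hx1'))).deriv
        rw [hg]
        simp only [id] at this
        rw [show (fun x => c * x - Real.binEntropy x) = (fun y => c * y) - Real.binEntropy from rfl, this]; ring
      rw [hd, hclog]
      have l1 : Real.log α < Real.log x := Real.log_lt_log hα0 hx1
      have l2 : Real.log (1 - x) < Real.log (1 - α) := Real.log_lt_log (by linarith) (by linarith)
      linarith
  have hgαβ : g α < g β := hmono (Set.left_mem_Icc.2 hαβ.le) (Set.right_mem_Icc.2 hαβ.le) hαβ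
  have : Real.binEntropy β - Real.binEntropy α < c * (β - α) := by
    simp only [hg] at hgαβ; linarith
  have hkey : (n - q) * (β - α) = q * α := by nlinarith [hβval]
  calc (n - q) * (Real.binEntropy β - Real.binEntropy α)
      ≤ (n - q) * (c * (β - α)) := by nlinarith
    _ = c * ((n - q) * (β - α)) := by ring
    _ = q * α * c := by rw [hkey]; ring
end
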